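/- Let A be a unital algebra of complex-valued functions on a finite set E = {x_1, ..., x_n}. Define x_i ∼ x_j iff f(x_i) = f(x_j) for all f ∈ A, and let X_1, ..., X_p be the equivalence classes. Then there exist e_1, ..., e_p ∈ A such that Σ_k e_k = 1 and e_k restricted to X_k is identically 1 and e_k restricted to X_l (l ≠ k) is identically 0. -/
import Mathlib


/-- If `A` is a unital algebra of complex-valued functions on a finite set
`E`, and `x ∼ y` iff `f x = f y` for all `f ∈ A`, then there is a partition of unity in
`A` indexed by the points: for each `x` a function `e x ∈ A` which is identically `1` on
the equivalence class of `x` and identically `0` on every other class.  (Summing `e` over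
a set of representatives of the classes then gives `Σ_k e_k = 1`.) -/
theorem stmt_6 {E : Type*} [Fintype E] (A : Subalgebra ℂ (E → ℂ)) :
    ∃ e : E → (E → ℂ), ∀ x : E,
      e x ∈ A ∧
      (∀ y : E, (∀ f ∈ A, f x = f y) → e x y = 1) ∧
      (∀ y : E, ¬ (∀ f ∈ A, f x = f y) → e x y = 0) := by
  classical
  have key : ∀ x y : E, ∃ g : E → ℂ, g ∈ A ∧ g x = 1 ∧
      (¬ (∀ f ∈ A, f x = f y) → g y = 0) := by
    intro x y
    by_cases h : ∀ f ∈ A, f x = f y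
    · exact ⟨1, A.one_mem, rfl, fun h' => absurd h h'⟩
    · push_neg at h
      obtain ⟨f, hf, hne⟩ := h
      refine ⟨(f x - f y)⁻¹ • (f - (fun _ => f y)), ?_, ?_, fun _ => ?_⟩
      · exact A.smul_mem (A.sub_mem hf (A.algebraMap_mem (f y))) _
      · have : f x - f y ≠ 0 := sub_ne_zero.mpr hne
        simp [Pi.smul_apply, inv_mul_cancel₀ this]
      · simp
  choose g hgA hgx hgy using key
  refine ⟨fun x => ∏ y, g x y, fun x => ⟨?_, ?_, ?_⟩⟩
  · exact A.prod_mem (fun y _ => hgA x y)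
  · intro y hy
    show (∏ z, g x z) y = 1
    have hxy : (∏ z, g x z) y = (∏ z, g x z) x :=
      (hy _ (A.prod_mem (fun z _ => hgA x z))).symm
    rw [hxy, Finset.prod_apply]
    simp [hgx]
  · intro y hy
    show (∏ z, g x z) y = 0
    rw [Finset.prod_apply]
    exact Finset.prod_eq_zero (Finset.mem_univ y) (hgy x y hy)
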